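/- The group Aut_Hopf(H_4) of Hopf algebra automorphisms of Sweedler's Hopf algebra H_4 is isomorphic to the multiplicative group k^* of units of k; explicitly, every automorphism has the form 1 ↦ 1, g ↦ g, x ↦ βx, gx ↦ βgx for a unique β ∈ k^*. -/

import Mathlib

open TensorProduct

set_option maxHeartbeats 1000000

noncomputable section

/-- `H` is (a model of) Sweedler's 4-dimensional Hopf algebra `H₄` with generators `g`, `x`:
`g² = 1`, `x² = 0`, `xg = -gx`, the family `{1, g, x, gx}` is a basis of `H`, `g` is
group-like, `x` is `(1, g)`-primitive, and `S(g) = g`, `S(x) = -gx`. -/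
structure IsSweedler (k : Type*) [CommRing k] (H : Type*) [Ring H] [HopfAlgebra k H]
    (g x : H) : Prop where
  g_sq : g * g = 1
  x_sq : x * x = 0
  x_mul_g : x * g = -(g * x)
  li : LinearIndependent k ![(1 : H), g, x, g * x]
  span : Submodule.span k {(1 : H), g, x, g * x} = ⊤
  comul_g : Coalgebra.comul (R := k) g = g ⊗ₜ[k] g
  comul_x : Coalgebra.comul (R := k) x = x ⊗ₜ[k] (1 : H) + g ⊗ₜ[k] x
  counit_g : Coalgebra.counit (R := k) g = 1
  counit_x : Coalgebra.counit (R := k) x = 0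
  antipode_g : HopfAlgebra.antipode (R := k) g = g
  antipode_x : HopfAlgebra.antipode (R := k) x = -(g * x)

namespace SweedlerAux

variable {k : Type*} [Field k] {H : Type*} [Ring H] [HopfAlgebra k H] {g x : H}

def basis (hs : IsSweedler k H g x) : Module.Basis (Fin 4) k H :=
  Module.Basis.mk hs.li (by
    rw [show Set.range ![(1 : H), g, x, g * x] = {(1 : H), g, x, g * x} by
      ext y; simp [Fin.exists_fin_succ, Matrix.cons_val_zero, Matrix.cons_val_succ, or_assoc]; tauto]
    exact hs.span.ge)

@[simp] lemma basis0 (hs : IsSweedler k H g x) : basis hs 0 = 1 := by simp [basis]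
@[simp] lemma basis1 (hs : IsSweedler k H g x) : basis hs 1 = g := by simp [basis]
@[simp] lemma basis2 (hs : IsSweedler k H g x) : basis hs 2 = x := by simp [basis]
@[simp] lemma basis3 (hs : IsSweedler k H g x) : basis hs 3 = g * x := by simp [basis]



lemma g_gx (hs : IsSweedler k H g x) : g * (g * x) = x := by rw [← mul_assoc, hs.g_sq, one_mul]
lemma gx_g (hs : IsSweedler k H g x) : (g * x) * g = -x := by
  rw [mul_assoc, hs.x_mul_g, mul_neg, ← mul_assoc, hs.g_sq, one_mul]
lemma x_gx (hs : IsSweedler k H g x) : x * (g * x) = 0 := by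
  rw [← mul_assoc, hs.x_mul_g, neg_mul, mul_assoc, hs.x_sq, mul_zero, neg_zero]
lemma gx_x (hs : IsSweedler k H g x) : (g * x) * x = 0 := by rw [mul_assoc, hs.x_sq, mul_zero]
lemma gx_gx (hs : IsSweedler k H g x) : (g * x) * (g * x) = 0 := by
  rw [mul_assoc, ← mul_assoc x, hs.x_mul_g, neg_mul, mul_assoc, hs.x_sq, mul_zero, neg_zero,
    mul_zero]
lemma comul_one' (hs : IsSweedler k H g x) : Coalgebra.comul (R := k) (1 : H) = (1:H) ⊗ₜ[k] (1:H) := by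
  rw [Bialgebra.comul_one, Algebra.TensorProduct.one_def]
lemma comul_gx (hs : IsSweedler k H g x) : Coalgebra.comul (R := k) (g * x) = (g * x) ⊗ₜ[k] g + (1:H) ⊗ₜ[k] (g * x) := by
  rw [Bialgebra.comul_mul, hs.comul_g, hs.comul_x, mul_add, Algebra.TensorProduct.tmul_mul_tmul,
    Algebra.TensorProduct.tmul_mul_tmul, mul_one, hs.g_sq]
lemma counit_one' (hs : IsSweedler k H g x) : Coalgebra.counit (R := k) (1 : H) = 1 := Bialgebra.counit_one
lemma counit_gx (hs : IsSweedler k H g x) : Coalgebra.counit (R := k) (g * x) = 0 := by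
  rw [Bialgebra.counit_mul, hs.counit_g, hs.counit_x, mul_zero]

@[simp] lemma repr_one (hs : IsSweedler k H g x) : (basis hs).repr 1 = Finsupp.single 0 1 := by
  simpa using (basis hs).repr_self 0
@[simp] lemma repr_g (hs : IsSweedler k H g x) : (basis hs).repr g = Finsupp.single 1 1 := by
  simpa using (basis hs).repr_self 1
@[simp] lemma repr_x (hs : IsSweedler k H g x) : (basis hs).repr x = Finsupp.single 2 1 := by
  simpa using (basis hs).repr_self 2
@[simp] lemma repr_gx (hs : IsSweedler k H g x) : (basis hs).repr (g * x) = Finsupp.single 3 1 := by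
  simpa using (basis hs).repr_self 3

/-- The linear map `1 ↦ 1, g ↦ g, x ↦ cx, gx ↦ c gx`. -/
def gamma (hs : IsSweedler k H g x) (c : k) : H →ₗ[k] H := (basis hs).constr k ![1, g, c • x, c • (g * x)]

@[simp] lemma gamma_one (hs : IsSweedler k H g x) (c : k) : gamma hs c 1 = 1 := by
  simpa [gamma] using (basis hs).constr_basis k ![1, g, c • x, c • (g*x)] 0
@[simp] lemma gamma_g (hs : IsSweedler k H g x) (c : k) : gamma hs c g = g := by
  simpa [gamma] using (basis hs).constr_basis k ![1, g, c • x, c • (g*x)] 1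
@[simp] lemma gamma_x (hs : IsSweedler k H g x) (c : k) : gamma hs c x = c • x := by
  simpa [gamma] using (basis hs).constr_basis k ![1, g, c • x, c • (g*x)] 2
@[simp] lemma gamma_gx (hs : IsSweedler k H g x) (c : k) : gamma hs c (g * x) = c • (g * x) := by
  simpa [gamma] using (basis hs).constr_basis k ![1, g, c • x, c • (g*x)] 3

lemma gamma_comp (hs : IsSweedler k H g x) (c d : k) : gamma hs c ∘ₗ gamma hs d = gamma hs (c * d) := by
  apply (basis hs).ext; intro i
  fin_cases i <;> simp [mul_smul]
  exact smul_comm _ _ _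
  exact smul_comm _ _ _

lemma gamma_one_eq (hs : IsSweedler k H g x) : gamma hs 1 = LinearMap.id := by
  apply (basis hs).ext; intro i
  fin_cases i <;> simp

lemma gamma_mul (hs : IsSweedler k H g x) (c : k) (a b : H) : gamma hs c (a * b) = gamma hs c a * gamma hs c b := by
  have h : (LinearMap.mul k H).compr₂ (gamma hs c)
      = (LinearMap.mul k H).compl₁₂ (gamma hs c) (gamma hs c) := by
    apply (basis hs).ext; intro i
    apply (basis hs).ext; intro j
    fin_cases i <;> fin_cases j <;>
      simp [hs.g_sq, hs.x_sq, hs.x_mul_g, g_gx hs, gx_g hs, x_gx hs, gx_x hs, gx_gx hs,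
        smul_mul_assoc, mul_smul_comm, smul_smul]
  exact LinearMap.congr_fun₂ h a b

lemma gamma_counit (hs : IsSweedler k H g x) (c : k) :
    Coalgebra.counit (R := k) ∘ₗ gamma hs c = Coalgebra.counit (R := k) := by
  apply (basis hs).ext; intro i
  fin_cases i <;>
    simp [counit_one' hs, hs.counit_g, hs.counit_x, counit_gx hs]

lemma gamma_comul (hs : IsSweedler k H g x) (c : k) :
    TensorProduct.map (gamma hs c) (gamma hs c) ∘ₗ Coalgebra.comul (R := k)
      = Coalgebra.comul (R := k) ∘ₗ gamma hs c := by
  apply (basis hs).ext; intro i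
  fin_cases i <;>
    simp [comul_one' hs, hs.comul_g, hs.comul_x, comul_gx hs, tmul_add, add_tmul,
      smul_tmul', tmul_smul, Algebra.TensorProduct.one_def, Algebra.TensorProduct.tmul_mul_tmul,
      mul_add, hs.g_sq]

/-- The Hopf algebra automorphism `x ↦ βx`. -/
def Gamma (hs : IsSweedler k H g x) (β : kˣ) : H ≃ₐc[k] H where
  toCoalgHom :=
    { toLinearMap := gamma hs (β : k)
      counit_comp := gamma_counit hs _
      map_comp_comul := gamma_comul hs _ }
  invFun := gamma hs ((β⁻¹ : kˣ) : k)
  left_inv := fun a => by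
    have h := gamma_comp hs ((β⁻¹ : kˣ) : k) (β : k)
    rw [show ((β⁻¹ : kˣ) : k) * (β : k) = 1 by exact_mod_cast β.inv_mul, gamma_one_eq] at h
    exact LinearMap.congr_fun h a
  right_inv := fun a => by
    have h := gamma_comp hs (β : k) ((β⁻¹ : kˣ) : k)
    rw [show (β : k) * ((β⁻¹ : kˣ) : k) = 1 by exact_mod_cast β.mul_inv, gamma_one_eq] at h
    exact LinearMap.congr_fun h a
  map_mul' := gamma_mul hs _

@[simp] lemma Gamma_apply (hs : IsSweedler k H g x) (β : kˣ) (a : H) : Gamma hs β a = gamma hs (β : k) a := rfl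


lemma x_ne_zero (hs : IsSweedler k H g x) : x ≠ 0 := by
  simpa using (basis hs).ne_zero 2

lemma g_ne_one (hs : IsSweedler k H g x) : g ≠ 1 := by
  intro h
  have h2 : basis hs 1 = basis hs 0 := by simp [h]
  exact absurd ((basis hs).injective h2) (by decide)

lemma hrep (hs : IsSweedler k H g x) (h : H) :
    h = (basis hs).repr h 0 • (1 : H) + (basis hs).repr h 1 • g
      + (basis hs).repr h 2 • x + (basis hs).repr h 3 • (g * x) := by
  have := (basis hs).sum_repr h
  rw [Fin.sum_univ_four] at this
  simpa using this.symm


lemma tp_repr (hs : IsSweedler k H g x) (m n : H) (ij : Fin 4 × Fin 4) :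
    (((basis hs).tensorProduct (basis hs)).repr (m ⊗ₜ[k] n)) ij
      = (basis hs).repr n ij.2 • (basis hs).repr m ij.1 := by
  obtain ⟨i, j⟩ := ij
  exact Module.Basis.tensorProduct_repr_tmul_apply (basis hs) (basis hs) m n i j

lemma psi_form (hchar : (2 : k) ≠ 0) (hs : IsSweedler k H g x) (ψ : H ≃ₐc[k] H) :
    ∃ c : k, c ≠ 0 ∧ ψ g = g ∧ ψ x = c • x ∧ ψ (g * x) = c • (g * x) := by
  -- Step A : ψ g = g
  have hg : ψ g = g := by
    obtain ⟨a, b, c, d, hrg⟩ : ∃ a b c d : k, ψ g = a • (1:H) + b • g + c • x + d • (g * x) :=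
      ⟨_, _, _, _, hrep hs (ψ g)⟩
    have hcom : Coalgebra.comul (R := k) (ψ g) = ψ g ⊗ₜ[k] ψ g := by
      have := CoalgHomClass.map_comp_comul_apply ψ g
      rw [hs.comul_g] at this
      simpa using this.symm
    have hL : Coalgebra.comul (R := k) (ψ g)
        = a • ((1:H) ⊗ₜ[k] (1:H)) + b • (g ⊗ₜ[k] g) + c • (x ⊗ₜ[k] (1:H) + g ⊗ₜ[k] x)
          + d • ((g*x) ⊗ₜ[k] g + (1:H) ⊗ₜ[k] (g*x)) := by
      conv_lhs => rw [hrg]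
      rw [map_add, map_add, map_add, map_smul, map_smul, map_smul, map_smul,
        comul_one' hs, hs.comul_g, hs.comul_x, comul_gx hs]
    have key : ∀ i j : Fin 4,
        (((basis hs).tensorProduct (basis hs)).repr (a • ((1:H) ⊗ₜ[k] (1:H)) + b • (g ⊗ₜ[k] g)
            + c • (x ⊗ₜ[k] (1:H) + g ⊗ₜ[k] x)
            + d • ((g*x) ⊗ₜ[k] g + (1:H) ⊗ₜ[k] (g*x)))) (i, j)
          = (((basis hs).tensorProduct (basis hs)).repr
              ((a • (1:H) + b • g + c • x + d • (g * x)) ⊗ₜ[k]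
               (a • (1:H) + b • g + c • x + d • (g * x)))) (i, j) := by
      intro i j
      rw [← hL, ← hrg, hcom]
    have h22 := key 2 2
    have h33 := key 3 3
    have h00 := key 0 0
    have h11 := key 1 1
    have h10 := key 1 0
    simp [tp_repr hs, tmul_add, add_tmul, Finsupp.single_apply]
      at h22 h33 h00 h11 h10
    have hcount : a + b = 1 := by
      have hcu := CoalgHomClass.counit_comp_apply (R := k) ψ g
      rw [hs.counit_g] at hcu
      have h2 := congrArg (Coalgebra.counit (R := k)) hrg
      rw [hcu] at h2
      simp [counit_one' hs, hs.counit_g, hs.counit_x, counit_gx hs] at h2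
      exact h2.symm
    rcases h10 with ha0 | hb0
    · have hb1 : b = 1 := by rw [ha0, zero_add] at hcount; exact hcount
      rw [hrg, ha0, hb1, h22, h33]; simp
    · have ha1 : a = 1 := by rw [hb0, add_zero] at hcount; exact hcount
      exfalso
      have hψ1 : ψ g = ψ 1 := by rw [hrg, ha1, hb0, h22, h33, map_one]; simp
      exact g_ne_one hs (EquivLike.injective ψ hψ1)
  -- Step B : ψ x = c • x
  obtain ⟨a, b, c, d, hrx⟩ : ∃ a b c d : k, ψ x = a • (1:H) + b • g + c • x + d • (g * x) :=
    ⟨_, _, _, _, hrep hs (ψ x)⟩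
  have hcomx : Coalgebra.comul (R := k) (ψ x) = ψ x ⊗ₜ[k] (1:H) + g ⊗ₜ[k] ψ x := by
    have := CoalgHomClass.map_comp_comul_apply ψ x
    rw [hs.comul_x] at this
    simpa [hg] using this.symm
  have hLx : Coalgebra.comul (R := k) (ψ x)
      = a • ((1:H) ⊗ₜ[k] (1:H)) + b • (g ⊗ₜ[k] g) + c • (x ⊗ₜ[k] (1:H) + g ⊗ₜ[k] x)
        + d • ((g*x) ⊗ₜ[k] g + (1:H) ⊗ₜ[k] (g*x)) := by
    conv_lhs => rw [hrx]
    rw [map_add, map_add, map_add, map_smul, map_smul, map_smul, map_smul,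
      comul_one' hs, hs.comul_g, hs.comul_x, comul_gx hs]
  have key : ∀ i j : Fin 4,
      (((basis hs).tensorProduct (basis hs)).repr (a • ((1:H) ⊗ₜ[k] (1:H)) + b • (g ⊗ₜ[k] g)
          + c • (x ⊗ₜ[k] (1:H) + g ⊗ₜ[k] x)
          + d • ((g*x) ⊗ₜ[k] g + (1:H) ⊗ₜ[k] (g*x)))) (i, j)
        = (((basis hs).tensorProduct (basis hs)).repr
            ((a • (1:H) + b • g + c • x + d • (g * x)) ⊗ₜ[k] (1:H)
              + g ⊗ₜ[k] (a • (1:H) + b • g + c • x + d • (g * x)))) (i, j) := by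
    intro i j
    rw [← hLx, ← hrx, hcomx]
  have h10 := key 1 0
  have h30 := key 3 0
  simp [tp_repr hs, tmul_add, add_tmul, Finsupp.single_apply] at h10 h30
  have hrel : (a • (1:H) + b • g + c • x + d • (g * x)) * g
      = -(g * (a • (1:H) + b • g + c • x + d • (g * x))) := by
    rw [← hrx]
    have h3 := map_mul ψ x g
    rw [hs.x_mul_g, map_neg, map_mul, hg] at h3
    exact h3.symm
  have e0 := congrArg (fun t => (basis hs).repr t 0) hrel
  have e1 := congrArg (fun t => (basis hs).repr t 1) hrel
  simp [add_mul, mul_add, smul_mul_assoc, mul_smul_comm, hs.g_sq, hs.x_mul_g, gx_g hs, g_gx hs,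
    Finsupp.single_apply] at e0 e1
  have hb0 : b = 0 := by
    have h2b : 2 * b = 0 := by linear_combination e0
    exact (mul_eq_zero.mp h2b).resolve_left hchar
  have ha0 : a = 0 := by
    have h2a : 2 * a = 0 := by linear_combination e1
    exact (mul_eq_zero.mp h2a).resolve_left hchar
  have hx : ψ x = c • x := by rw [hrx, ha0, hb0, ← h30]; simp
  have hc : c ≠ 0 := by
    intro h
    apply x_ne_zero hs
    have h4 : ψ x = ψ 0 := by rw [hx, h, zero_smul, map_zero]
    exact EquivLike.injective ψ h4
  refine ⟨c, hc, hg, hx, ?_⟩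
  rw [map_mul, hg, hx, mul_smul_comm]

end SweedlerAux

/-- The group of Hopf algebra automorphisms of Sweedler's Hopf algebra `H₄` is isomorphic
to the multiplicative group `kˣ`: explicitly, every automorphism fixes `1` and `g` and
is of the form `x ↦ βx`, `gx ↦ βgx` for a unique `β ∈ kˣ`, and there is a bijection
`Γ : kˣ → Aut_Hopf(H₄)` with `Γ(αβ) = Γ(α) ∘ Γ(β)`. -/
theorem sweedler_hopf_automorphism_group
    {k : Type*} [Field k] (hchar : (2 : k) ≠ 0) {H : Type*} [Ring H] [HopfAlgebra k H]
    {g x : H} (hs : IsSweedler k H g x) :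
    (∀ ψ : H ≃ₐc[k] H, ∃! β : kˣ,
      ψ 1 = 1 ∧ ψ g = g ∧ ψ x = (β : k) • x ∧ ψ (g * x) = (β : k) • (g * x)) ∧
    ∃ Γ : kˣ → (H ≃ₐc[k] H), Function.Bijective Γ ∧
      ∀ α β : kˣ, Γ (α * β) = (Γ β).trans (Γ α) := by
  have unit_eq : ∀ (c d : k), c • x = d • x → c = d := by
    intro c d h
    have h6 : (c - d) • x = 0 := by rw [sub_smul, h, sub_self]
    rcases smul_eq_zero.mp h6 with h | h
    · exact sub_eq_zero.mp h
    · exact absurd h (SweedlerAux.x_ne_zero hs)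
  constructor
  · intro ψ
    obtain ⟨c, hc, hg, hx, hgx⟩ := SweedlerAux.psi_form hchar hs ψ
    refine ⟨Units.mk0 c hc, ⟨map_one ψ, hg, by simpa using hx, by simpa using hgx⟩, ?_⟩
    rintro β ⟨-, -, hβx, -⟩
    apply Units.ext
    exact unit_eq _ _ (by rw [← hβx, hx, Units.val_mk0])
  · refine ⟨SweedlerAux.Gamma hs, ⟨?_, ?_⟩, ?_⟩
    · intro α β h
      have h7 := DFunLike.congr_fun h x
      simp only [SweedlerAux.Gamma_apply, SweedlerAux.gamma_x] at h7
      exact Units.ext (unit_eq _ _ h7)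
    · intro ψ
      obtain ⟨c, hc, hg, hx, hgx⟩ := SweedlerAux.psi_form hchar hs ψ
      refine ⟨Units.mk0 c hc, ?_⟩
      apply DFunLike.ext
      intro a
      have ha : a ∈ Submodule.span k {(1:H), g, x, g*x} := hs.span ▸ Submodule.mem_top
      induction ha using Submodule.span_induction with
      | mem b hb =>
        simp only [Set.mem_insert_iff, Set.mem_singleton_iff] at hb
        rcases hb with rb | rb | rb | rb <;> subst rb <;>
          simp [map_one ψ, hg, hx, hgx]
      | zero => simp
      | add p q hp hq hp' hq' => rw [map_add, map_add, hp', hq']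
      | smul r p hp hp' => rw [map_smul, map_smul, hp']
    · intro α β
      apply DFunLike.ext
      intro a
      show SweedlerAux.gamma hs ((α * β : kˣ) : k) a
        = SweedlerAux.gamma hs (α : k) (SweedlerAux.gamma hs (β : k) a)
      rw [Units.val_mul]
      exact (LinearMap.congr_fun (SweedlerAux.gamma_comp hs (α : k) (β : k)) a).symm

end
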